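/- Suppose P2 = Σᵢ,ⱼ aᵢⱼ hᵢhⱼ is a homogeneous quadratic polynomial in h1,...,h8 with {H, P2} = 0 identically, where H = (h1²+h2²)/2 and {·,·} is the Lie–Poisson bracket of the free nilpotent Lie algebra of rank 2, step 4. Then P2 = Σᵢ,ⱼ₌₆⁸ aᵢⱼhᵢhⱼ + bH for some constants aᵢⱼ, b ∈ ℝ, i.e. P2 is a real combination of H and quadratic monomials in h6, h7, h8. -/

import Mathlib

/- Casimir functions of the Lie–Poisson structure on the dual of the free
nilpotent Lie algebra of rank 2, step 4. -/

noncomputable section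

abbrev Lstar : Type := Fin 8 → ℝ

/-- Nonzero part of the structure constants (0-indexed):
[X1,X2]=X3, [X1,X3]=X4, [X2,X3]=X5, [X1,X4]=X6, [X1,X5]=[X2,X4]=X7, [X2,X5]=X8. -/
noncomputable def posPart (i j k : Fin 8) : ℝ :=
  if (i, j, k) = (0, 1, 2) ∨ (i, j, k) = (0, 2, 3) ∨ (i, j, k) = (1, 2, 4) ∨
     (i, j, k) = (0, 3, 5) ∨ (i, j, k) = (0, 4, 6) ∨ (i, j, k) = (1, 3, 6) ∨
     (i, j, k) = (1, 4, 7)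
  then (1 : ℝ) else 0

/-- Skew-symmetrized structure constants cᵢⱼᵏ. -/
noncomputable def c (i j k : Fin 8) : ℝ := posPart i j k - posPart j i k

/-- Partial derivative ∂f/∂hᵢ at h. -/
noncomputable def pd (f : Lstar → ℝ) (h : Lstar) (i : Fin 8) : ℝ :=
  fderiv ℝ f h (Pi.single i 1)

/-- Lie–Poisson bracket: {f,g}(h) = Σᵢⱼₖ cᵢⱼᵏ hₖ (∂f/∂hᵢ)(∂g/∂hⱼ). -/
noncomputable def poisson (f g : Lstar → ℝ) (h : Lstar) : ℝ :=
  ∑ i, ∑ j, ∑ k, c i j k * h k * pd f h i * pd g h j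


/-- The Hamiltonian H = (h1² + h2²)/2. -/
noncomputable def Ham (h : Lstar) : ℝ := ((h 0)^2 + (h 1)^2) / 2

lemma pdHam (h : Lstar) (i : Fin 8) :
    pd Ham h i = h 0 * (Pi.single i 1 : Lstar) 0 + h 1 * (Pi.single i 1 : Lstar) 1 := by
  have d0 : HasFDerivAt (fun h : Lstar => h 0)
      (ContinuousLinearMap.proj 0 : Lstar →L[ℝ] ℝ) h :=
    (ContinuousLinearMap.proj 0 : Lstar →L[ℝ] ℝ).hasFDerivAt
  have d1 : HasFDerivAt (fun h : Lstar => h 1)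
      (ContinuousLinearMap.proj 1 : Lstar →L[ℝ] ℝ) h :=
    (ContinuousLinearMap.proj 1 : Lstar →L[ℝ] ℝ).hasFDerivAt
  have hHam : Ham = fun h : Lstar => ((h 0 * h 0) + (h 1 * h 1)) * 2⁻¹ := by
    funext x; simp [Ham]; ring
  have dH := ((d0.fun_mul d0).fun_add (d1.fun_mul d1)).mul_const (2⁻¹:ℝ)
  rw [pd, hHam, dH.fderiv]
  simp [ContinuousLinearMap.proj_apply]
  ring

lemma pdQuad (a : Fin 8 → Fin 8 → ℝ) (h : Lstar) (k : Fin 8) :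
    pd (fun h => ∑ i, ∑ j, a i j * h i * h j) h k
      = ∑ m, (a k m + a m k) * h m := by
  have dP : HasFDerivAt (fun h : Lstar => ∑ i, ∑ j, a i j * h i * h j)
      (∑ i, ∑ j, ((a i j * h i) • (ContinuousLinearMap.proj j : Lstar →L[ℝ] ℝ)
        + h j • ((a i j) • (ContinuousLinearMap.proj i : Lstar →L[ℝ] ℝ)))) h := by
    apply HasFDerivAt.fun_sum
    intro i _
    apply HasFDerivAt.fun_sum
    intro j _
    exact (((ContinuousLinearMap.proj i : Lstar →L[ℝ] ℝ).hasFDerivAt.const_mul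
      (a i j)).mul (ContinuousLinearMap.proj j : Lstar →L[ℝ] ℝ).hasFDerivAt)
  rw [pd, dP.fderiv]
  simp [ContinuousLinearMap.sum_apply, ContinuousLinearMap.proj_apply,
    Pi.single_apply, Finset.mul_sum, mul_ite, Finset.sum_ite_eq, Finset.sum_ite_eq']
  simp only [Finset.sum_add_distrib, Finset.sum_ite_eq', Finset.mem_univ, if_true]
  rw [Finset.sum_comm (γ := Fin 8) (s := Finset.univ) (t := Finset.univ)]
  simp only [Finset.sum_ite_eq', Finset.mem_univ, if_true, ← Finset.sum_add_distrib]
  exact Finset.sum_congr rfl (fun m _ => by ring)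

set_option maxHeartbeats 2000000 in
lemma key (f : Lstar → ℝ) (h : Lstar) :
    poisson Ham f h
      = h 2 * (h 0 * pd f h 1 - h 1 * pd f h 0)
      + h 3 * (h 0 * pd f h 2) + h 4 * (h 1 * pd f h 2)
      + h 5 * (h 0 * pd f h 3)
      + h 6 * (h 0 * pd f h 4 + h 1 * pd f h 3)
      + h 7 * (h 1 * pd f h 4) := by
  unfold poisson c _root_.posPart
  simp only [Fin.sum_univ_eight, Prod.mk.injEq, Fin.reduceEq, pdHam,
    Pi.single_apply, if_true, if_false, and_true, and_false, false_and, true_and,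
    or_false, false_or, or_self, ite_true, ite_false]
  norm_num
  ring

set_option maxHeartbeats 4000000 in
/-- A homogeneous quadratic integral P2 = Σᵢⱼ aᵢⱼhᵢhⱼ of the vertical flow
is a combination of H and quadratic monomials in h6, h7, h8. -/
theorem quadratic_integrals (a : Fin 8 → Fin 8 → ℝ)
    (hint : poisson Ham (fun h => ∑ i, ∑ j, a i j * h i * h j) = 0) :
    ∃ (a' : Fin 8 → Fin 8 → ℝ) (b : ℝ),
      (∀ i j : Fin 8, a' i j ≠ 0 → 5 ≤ (i : ℕ) ∧ 5 ≤ (j : ℕ)) ∧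
      ∀ h : Lstar, ∑ i, ∑ j, a i j * h i * h j
        = (∑ i, ∑ j, a' i j * h i * h j) + b * Ham h := by
  have keyP : ∀ h : Lstar,
      h 2 * (h 0 * (∑ m, (a 1 m + a m 1) * h m) - h 1 * (∑ m, (a 0 m + a m 0) * h m))
      + h 3 * (h 0 * (∑ m, (a 2 m + a m 2) * h m))
      + h 4 * (h 1 * (∑ m, (a 2 m + a m 2) * h m))
      + h 5 * (h 0 * (∑ m, (a 3 m + a m 3) * h m))
      + h 6 * (h 0 * (∑ m, (a 4 m + a m 4) * h m) + h 1 * (∑ m, (a 3 m + a m 3) * h m))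
      + h 7 * (h 1 * (∑ m, (a 4 m + a m 4) * h m)) = 0 := by
    intro h
    have hh := congrFun hint h
    rw [key] at hh
    simp only [pdQuad, Pi.zero_apply] at hh
    linarith [hh]
  have eq1 := keyP (Pi.single (1 : Fin 8) (1 : ℝ) + Pi.single (2 : Fin 8) (1 : ℝ))
  simp only [Pi.add_apply, Pi.single_apply, Fin.sum_univ_eight, Fin.reduceEq,
    if_true, if_false, ite_true, ite_false] at eq1
  norm_num at eq1
  have eq2 := keyP (Pi.single (1 : Fin 8) (2 : ℝ) + Pi.single (2 : Fin 8) (1 : ℝ))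
  simp only [Pi.add_apply, Pi.single_apply, Fin.sum_univ_eight, Fin.reduceEq,
    if_true, if_false, ite_true, ite_false] at eq2
  norm_num at eq2
  have eq3 := keyP (Pi.single (0 : Fin 8) (1 : ℝ) + Pi.single (2 : Fin 8) (1 : ℝ))
  simp only [Pi.add_apply, Pi.single_apply, Fin.sum_univ_eight, Fin.reduceEq,
    if_true, if_false, ite_true, ite_false] at eq3
  norm_num at eq3
  have eq4 := keyP (Pi.single (0 : Fin 8) (2 : ℝ) + Pi.single (2 : Fin 8) (1 : ℝ))
  simp only [Pi.add_apply, Pi.single_apply, Fin.sum_univ_eight, Fin.reduceEq,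
    if_true, if_false, ite_true, ite_false] at eq4
  norm_num at eq4
  have eq5 := keyP (Pi.single (0 : Fin 8) (1 : ℝ) + Pi.single (3 : Fin 8) (1 : ℝ))
  simp only [Pi.add_apply, Pi.single_apply, Fin.sum_univ_eight, Fin.reduceEq,
    if_true, if_false, ite_true, ite_false] at eq5
  norm_num at eq5
  have eq6 := keyP (Pi.single (0 : Fin 8) (2 : ℝ) + Pi.single (3 : Fin 8) (1 : ℝ))
  simp only [Pi.add_apply, Pi.single_apply, Fin.sum_univ_eight, Fin.reduceEq,
    if_true, if_false, ite_true, ite_false] at eq6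
  norm_num at eq6
  have eq7 := keyP (Pi.single (1 : Fin 8) (1 : ℝ) + Pi.single (4 : Fin 8) (1 : ℝ))
  simp only [Pi.add_apply, Pi.single_apply, Fin.sum_univ_eight, Fin.reduceEq,
    if_true, if_false, ite_true, ite_false] at eq7
  norm_num at eq7
  have eq8 := keyP (Pi.single (1 : Fin 8) (2 : ℝ) + Pi.single (4 : Fin 8) (1 : ℝ))
  simp only [Pi.add_apply, Pi.single_apply, Fin.sum_univ_eight, Fin.reduceEq,
    if_true, if_false, ite_true, ite_false] at eq8
  norm_num at eq8
  have eq9 := keyP (Pi.single (0 : Fin 8) (1 : ℝ) + Pi.single (5 : Fin 8) (1 : ℝ))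
  simp only [Pi.add_apply, Pi.single_apply, Fin.sum_univ_eight, Fin.reduceEq,
    if_true, if_false, ite_true, ite_false] at eq9
  norm_num at eq9
  have eq10 := keyP (Pi.single (0 : Fin 8) (2 : ℝ) + Pi.single (5 : Fin 8) (1 : ℝ))
  simp only [Pi.add_apply, Pi.single_apply, Fin.sum_univ_eight, Fin.reduceEq,
    if_true, if_false, ite_true, ite_false] at eq10
  norm_num at eq10
  have eq11 := keyP (Pi.single (1 : Fin 8) (1 : ℝ) + Pi.single (6 : Fin 8) (1 : ℝ))
  simp only [Pi.add_apply, Pi.single_apply, Fin.sum_univ_eight, Fin.reduceEq,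
    if_true, if_false, ite_true, ite_false] at eq11
  norm_num at eq11
  have eq12 := keyP (Pi.single (1 : Fin 8) (2 : ℝ) + Pi.single (6 : Fin 8) (1 : ℝ))
  simp only [Pi.add_apply, Pi.single_apply, Fin.sum_univ_eight, Fin.reduceEq,
    if_true, if_false, ite_true, ite_false] at eq12
  norm_num at eq12
  have eq13 := keyP (Pi.single (1 : Fin 8) (1 : ℝ) + Pi.single (7 : Fin 8) (1 : ℝ))
  simp only [Pi.add_apply, Pi.single_apply, Fin.sum_univ_eight, Fin.reduceEq,
    if_true, if_false, ite_true, ite_false] at eq13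
  norm_num at eq13
  have eq14 := keyP (Pi.single (1 : Fin 8) (2 : ℝ) + Pi.single (7 : Fin 8) (1 : ℝ))
  simp only [Pi.add_apply, Pi.single_apply, Fin.sum_univ_eight, Fin.reduceEq,
    if_true, if_false, ite_true, ite_false] at eq14
  norm_num at eq14
  have eq15 := keyP (Pi.single (0 : Fin 8) (1 : ℝ) + Pi.single (6 : Fin 8) (1 : ℝ))
  simp only [Pi.add_apply, Pi.single_apply, Fin.sum_univ_eight, Fin.reduceEq,
    if_true, if_false, ite_true, ite_false] at eq15
  norm_num at eq15
  have eq16 := keyP (Pi.single (0 : Fin 8) (2 : ℝ) + Pi.single (6 : Fin 8) (1 : ℝ))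
  simp only [Pi.add_apply, Pi.single_apply, Fin.sum_univ_eight, Fin.reduceEq,
    if_true, if_false, ite_true, ite_false] at eq16
  norm_num at eq16
  have eq17 := keyP (Pi.single (0 : Fin 8) (1 : ℝ) + Pi.single (1 : Fin 8) (1 : ℝ) + Pi.single (2 : Fin 8) (1 : ℝ))
  simp only [Pi.add_apply, Pi.single_apply, Fin.sum_univ_eight, Fin.reduceEq,
    if_true, if_false, ite_true, ite_false] at eq17
  norm_num at eq17
  have eq18 := keyP (Pi.single (1 : Fin 8) (1 : ℝ) + Pi.single (2 : Fin 8) (1 : ℝ) + Pi.single (4 : Fin 8) (1 : ℝ))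
  simp only [Pi.add_apply, Pi.single_apply, Fin.sum_univ_eight, Fin.reduceEq,
    if_true, if_false, ite_true, ite_false] at eq18
  norm_num at eq18
  have eq19 := keyP (Pi.single (0 : Fin 8) (1 : ℝ) + Pi.single (2 : Fin 8) (1 : ℝ) + Pi.single (5 : Fin 8) (1 : ℝ))
  simp only [Pi.add_apply, Pi.single_apply, Fin.sum_univ_eight, Fin.reduceEq,
    if_true, if_false, ite_true, ite_false] at eq19
  norm_num at eq19
  have eq20 := keyP (Pi.single (0 : Fin 8) (1 : ℝ) + Pi.single (2 : Fin 8) (1 : ℝ) + Pi.single (6 : Fin 8) (1 : ℝ))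
  simp only [Pi.add_apply, Pi.single_apply, Fin.sum_univ_eight, Fin.reduceEq,
    if_true, if_false, ite_true, ite_false] at eq20
  norm_num at eq20
  have eq21 := keyP (Pi.single (0 : Fin 8) (1 : ℝ) + Pi.single (2 : Fin 8) (1 : ℝ) + Pi.single (7 : Fin 8) (1 : ℝ))
  simp only [Pi.add_apply, Pi.single_apply, Fin.sum_univ_eight, Fin.reduceEq,
    if_true, if_false, ite_true, ite_false] at eq21
  norm_num at eq21
  have eq22 := keyP (Pi.single (0 : Fin 8) (1 : ℝ) + Pi.single (4 : Fin 8) (1 : ℝ) + Pi.single (5 : Fin 8) (1 : ℝ))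
  simp only [Pi.add_apply, Pi.single_apply, Fin.sum_univ_eight, Fin.reduceEq,
    if_true, if_false, ite_true, ite_false] at eq22
  norm_num at eq22
  have eq23 := keyP (Pi.single (0 : Fin 8) (1 : ℝ) + Pi.single (4 : Fin 8) (1 : ℝ) + Pi.single (6 : Fin 8) (1 : ℝ))
  simp only [Pi.add_apply, Pi.single_apply, Fin.sum_univ_eight, Fin.reduceEq,
    if_true, if_false, ite_true, ite_false] at eq23
  norm_num at eq23
  have eq24 := keyP (Pi.single (1 : Fin 8) (1 : ℝ) + Pi.single (3 : Fin 8) (1 : ℝ) + Pi.single (6 : Fin 8) (1 : ℝ))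
  simp only [Pi.add_apply, Pi.single_apply, Fin.sum_univ_eight, Fin.reduceEq,
    if_true, if_false, ite_true, ite_false] at eq24
  norm_num at eq24
  have eq25 := keyP (Pi.single (0 : Fin 8) (1 : ℝ) + Pi.single (3 : Fin 8) (1 : ℝ) + Pi.single (5 : Fin 8) (1 : ℝ))
  simp only [Pi.add_apply, Pi.single_apply, Fin.sum_univ_eight, Fin.reduceEq,
    if_true, if_false, ite_true, ite_false] at eq25
  norm_num at eq25
  have eq26 := keyP (Pi.single (0 : Fin 8) (1 : ℝ) + Pi.single (3 : Fin 8) (1 : ℝ) + Pi.single (6 : Fin 8) (1 : ℝ))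
  simp only [Pi.add_apply, Pi.single_apply, Fin.sum_univ_eight, Fin.reduceEq,
    if_true, if_false, ite_true, ite_false] at eq26
  norm_num at eq26
  have eq27 := keyP (Pi.single (0 : Fin 8) (1 : ℝ) + Pi.single (3 : Fin 8) (1 : ℝ) + Pi.single (7 : Fin 8) (1 : ℝ))
  simp only [Pi.add_apply, Pi.single_apply, Fin.sum_univ_eight, Fin.reduceEq,
    if_true, if_false, ite_true, ite_false] at eq27
  norm_num at eq27
  have eq28 := keyP (Pi.single (1 : Fin 8) (1 : ℝ) + Pi.single (2 : Fin 8) (1 : ℝ) + Pi.single (5 : Fin 8) (1 : ℝ))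
  simp only [Pi.add_apply, Pi.single_apply, Fin.sum_univ_eight, Fin.reduceEq,
    if_true, if_false, ite_true, ite_false] at eq28
  norm_num at eq28
  have eq29 := keyP (Pi.single (1 : Fin 8) (1 : ℝ) + Pi.single (2 : Fin 8) (1 : ℝ) + Pi.single (6 : Fin 8) (1 : ℝ))
  simp only [Pi.add_apply, Pi.single_apply, Fin.sum_univ_eight, Fin.reduceEq,
    if_true, if_false, ite_true, ite_false] at eq29
  norm_num at eq29
  have eq30 := keyP (Pi.single (1 : Fin 8) (1 : ℝ) + Pi.single (2 : Fin 8) (1 : ℝ) + Pi.single (7 : Fin 8) (1 : ℝ))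
  simp only [Pi.add_apply, Pi.single_apply, Fin.sum_univ_eight, Fin.reduceEq,
    if_true, if_false, ite_true, ite_false] at eq30
  norm_num at eq30
  have eq31 := keyP (Pi.single (1 : Fin 8) (1 : ℝ) + Pi.single (5 : Fin 8) (1 : ℝ) + Pi.single (7 : Fin 8) (1 : ℝ))
  simp only [Pi.add_apply, Pi.single_apply, Fin.sum_univ_eight, Fin.reduceEq,
    if_true, if_false, ite_true, ite_false] at eq31
  norm_num at eq31
  have eq32 := keyP (Pi.single (0 : Fin 8) (1 : ℝ) + Pi.single (5 : Fin 8) (1 : ℝ) + Pi.single (7 : Fin 8) (1 : ℝ))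
  simp only [Pi.add_apply, Pi.single_apply, Fin.sum_univ_eight, Fin.reduceEq,
    if_true, if_false, ite_true, ite_false] at eq32
  norm_num at eq32
  have t01 : a 0 1 + a 1 0 = 0 := by linarith [eq1, eq2]
  have t02 : a 0 2 + a 2 0 = 0 := by linarith [eq1, eq2]
  have t03 : a 0 3 + a 3 0 = 0 := by linarith [eq9, eq10]
  have t04 : a 0 4 + a 4 0 = 0 := by linarith [eq15, eq16]
  have t05 : a 0 5 + a 5 0 = 0 := by linarith [eq1, eq28]
  have t06 : a 0 6 + a 6 0 = 0 := by linarith [eq1, eq2, eq5, eq11, eq29]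
  have t07 : a 0 7 + a 7 0 = 0 := by linarith [eq1, eq2, eq3, eq7, eq13, eq30]
  have t12 : a 1 2 + a 2 1 = 0 := by linarith [eq1, eq2, eq3]
  have t13 : a 1 3 + a 3 1 = 0 := by linarith [eq11, eq12]
  have t14 : a 1 4 + a 4 1 = 0 := by linarith [eq13, eq14]
  have t15 : a 1 5 + a 5 1 = 0 := by linarith [eq1, eq2, eq3, eq5, eq9, eq19]
  have t16 : a 1 6 + a 6 1 = 0 := by linarith [eq1, eq2, eq7, eq15, eq20]
  have t17 : a 1 7 + a 7 1 = 0 := by linarith [eq3, eq21]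
  have t23 : a 2 3 + a 3 2 = 0 := by linarith [eq1, eq2, eq5]
  have t24 : a 2 4 + a 4 2 = 0 := by linarith [eq1, eq2, eq3, eq7]
  have t25 : a 2 5 + a 5 2 = 0 := by linarith [eq5, eq9, eq11, eq24, eq25]
  have t26 : a 2 6 + a 6 2 = 0 := by linarith [eq5, eq9, eq15, eq22, eq26]
  have t27 : a 2 7 + a 7 2 = 0 := by linarith [eq5, eq27]
  have t34 : a 3 4 + a 4 3 = 0 := by linarith [eq9, eq22]
  have t35 : a 3 5 + a 5 3 = 0 := by linarith [eq9, eq10]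
  have t36 : a 3 6 + a 6 3 = 0 := by linarith [eq11, eq12]
  have t37 : a 3 7 + a 7 3 = 0 := by linarith [eq9, eq32]
  have t45 : a 4 5 + a 5 4 = 0 := by linarith [eq13, eq31]
  have t46 : a 4 6 + a 6 4 = 0 := by linarith [eq15, eq16]
  have t47 : a 4 7 + a 7 4 = 0 := by linarith [eq13, eq14]
  have t22 : a 2 2 = 0 := by linarith [eq1, eq7, eq15, eq16, eq18]
  have t33 : a 3 3 = 0 := by linarith [eq11, eq24]
  have t44 : a 4 4 = 0 := by linarith [eq15, eq23]
  have t11 : a 1 1 = a 0 0 := by linarith [eq1, eq3, eq17]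
  refine ⟨fun i j => if 5 ≤ (i : ℕ) ∧ 5 ≤ (j : ℕ) then a i j else 0, 2 * a 0 0,
    fun i j hne => ?_, fun h => ?_⟩
  · by_contra hc
    exact hne (if_neg hc)
  · simp only [Fin.sum_univ_eight, Ham, show ((0:Fin 8):ℕ) = 0 from rfl, show ((1:Fin 8):ℕ) = 1 from rfl, show ((2:Fin 8):ℕ) = 2 from rfl, show ((3:Fin 8):ℕ) = 3 from rfl, show ((4:Fin 8):ℕ) = 4 from rfl, show ((5:Fin 8):ℕ) = 5 from rfl, show ((6:Fin 8):ℕ) = 6 from rfl, show ((7:Fin 8):ℕ) = 7 from rfl]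
    norm_num
    linear_combination h 0 * h 1 * t01 + h 0 * h 2 * t02 + h 0 * h 3 * t03 + h 0 * h 4 * t04 + h 0 * h 5 * t05 + h 0 * h 6 * t06 + h 0 * h 7 * t07 + h 1 * h 2 * t12 + h 1 * h 3 * t13 + h 1 * h 4 * t14 + h 1 * h 5 * t15 + h 1 * h 6 * t16 + h 1 * h 7 * t17 + h 2 * h 3 * t23 + h 2 * h 4 * t24 + h 2 * h 5 * t25 + h 2 * h 6 * t26 + h 2 * h 7 * t27 + h 3 * h 4 * t34 + h 3 * h 5 * t35 + h 3 * h 6 * t36 + h 3 * h 7 * t37 + h 4 * h 5 * t45 + h 4 * h 6 * t46 + h 4 * h 7 * t47 + h 2 ^ 2 * t22 + h 3 ^ 2 * t33 + h 4 ^ 2 * t44 + h 1 ^ 2 * t11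

end
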